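/- For any nonnegative random variables S and I with I > 0 almost surely, E[log(1 + S/I)] = ∫₀^∞ (1/γ)·(E[e^{−γI}] − E[e^{−γ(I+S)}]) dγ, provided the relevant expectations are finite. In particular, if S and I are independent, E[log(1 + S/I)] = ∫₀^∞ (1/γ)·E[e^{−γI}]·(1 − E[e^{−γS}]) dγ. -/

import Mathlib

open MeasureTheory ProbabilityTheory Set Real

lemma expInt {t : ℝ} (ht : 0 < t) : ∫ γ in Ioi (0:ℝ), Real.exp (-(t * γ)) = 1 / t := by
  have := integral_comp_mul_left_Ioi (fun x => Real.exp (-x)) 0 ht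
  simp only [mul_zero, integral_exp_neg_Ioi, neg_zero, Real.exp_zero, smul_eq_mul, mul_one] at this
  simpa [one_div] using this

lemma intExp {γ : ℝ} (hγ : 0 < γ) (a b : ℝ) :
    ∫ t in a..b, Real.exp (-(γ*t)) = (Real.exp (-(γ*a)) - Real.exp (-(γ*b)))/γ := by
  have hd : ∀ t : ℝ, HasDerivAt (fun u => -Real.exp (-(γ*u))/γ) (Real.exp (-(γ*t))) t := by
    intro t
    have h1 : HasDerivAt (fun u : ℝ => -(γ*u)) (-γ) t := by
      have h0 := ((hasDerivAt_id t).const_mul γ).neg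
      simp only [id, mul_one] at h0
      exact h0
    have h3 := (h1.exp.neg).div_const γ
    refine h3.congr_deriv ?_
    field_simp
  rw [intervalIntegral.integral_eq_sub_of_hasDerivAt (fun t _ => hd t)
    (Continuous.intervalIntegrable (by continuity) a b)]
  ring

lemma frullani {i s : ℝ} (hi : 0 < i) (hs : 0 ≤ s) :
    ∫⁻ γ in Ioi (0:ℝ), ENNReal.ofReal ((Real.exp (-(γ*i)) - Real.exp (-(γ*(i+s))))/γ)
      = ENNReal.ofReal (Real.log (1 + s/i)) := by
  have hib : i ≤ i + s := by linarith
  have step1 : ∀ γ ∈ Ioi (0:ℝ),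
      ENNReal.ofReal ((Real.exp (-(γ*i)) - Real.exp (-(γ*(i+s))))/γ)
        = ∫⁻ t in Ioc i (i+s), ENNReal.ofReal (Real.exp (-(γ*t))) := by
    intro γ hγ
    rw [mem_Ioi] at hγ
    have hint : IntegrableOn (fun t => Real.exp (-(γ*t))) (Ioc i (i+s)) := by
      apply Continuous.integrableOn_Ioc; continuity
    rw [← ofReal_integral_eq_lintegral_ofReal hint
      (Filter.Eventually.of_forall fun t => (Real.exp_pos _).le)]
    congr 1
    rw [← intervalIntegral.integral_of_le hib, intExp hγ]
  rw [setLIntegral_congr_fun measurableSet_Ioi step1]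
  rw [lintegral_lintegral_swap]
  · have inner : ∀ t ∈ Ioc i (i+s),
        ∫⁻ γ in Ioi (0:ℝ), ENNReal.ofReal (Real.exp (-(γ*t))) = ENNReal.ofReal (1/t) := by
      intro t ht
      have ht0 : 0 < t := lt_of_lt_of_le hi ht.1.le
      have hint : IntegrableOn (fun γ => Real.exp (-(γ*t))) (Ioi (0:ℝ)) := by
        simpa [mul_comm, neg_mul] using exp_neg_integrableOn_Ioi 0 ht0
      rw [← ofReal_integral_eq_lintegral_ofReal hint
        (Filter.Eventually.of_forall fun γ => (Real.exp_pos _).le)]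
      congr 1
      rw [← expInt ht0]
      simp [mul_comm]
    rw [setLIntegral_congr_fun measurableSet_Ioc inner]
    have hint1 : IntegrableOn (fun t : ℝ => 1/t) (Ioc i (i+s)) := by
      have : ContinuousOn (fun t : ℝ => 1/t) (Icc i (i+s)) :=
        ContinuousOn.div continuousOn_const continuousOn_id
          (fun x hx => (lt_of_lt_of_le hi hx.1).ne')
      exact (this.integrableOn_compact isCompact_Icc).mono_set Ioc_subset_Icc_self
    rw [← ofReal_integral_eq_lintegral_ofReal hint1]
    · congr 1
      rw [← intervalIntegral.integral_of_le hib, integral_one_div_of_pos hi (by linarith)]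
      congr 1
      field_simp
    · filter_upwards [ae_restrict_mem measurableSet_Ioc] with t ht
      have := lt_of_lt_of_le hi ht.1.le
      positivity
  · apply Measurable.aemeasurable
    apply Measurable.ennreal_ofReal
    measurability

/-- For nonnegative random variables `S` and `I` with `I > 0` almost surely and
all relevant expectations finite,
`E[log (1 + S/I)] = ∫₀^∞ (1/γ) (E[e^{-γI}] - E[e^{-γ(I+S)}]) dγ`; if moreover `S` and `I`
are independent, this equals `∫₀^∞ (1/γ) E[e^{-γI}] (1 - E[e^{-γS}]) dγ`. -/
theorem stmt_7
    {Ω : Type*} [MeasurableSpace Ω] (P : Measure Ω) [IsProbabilityMeasure P]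
    (S I : Ω → ℝ) (hSmeas : Measurable S) (hImeas : Measurable I)
    (hS : ∀ᵐ ω ∂P, 0 ≤ S ω) (hI : ∀ᵐ ω ∂P, 0 < I ω)
    (hint : Integrable (fun ω => Real.log (1 + S ω / I ω)) P) :
    (∫ ω, Real.log (1 + S ω / I ω) ∂P =
      ∫ γ in Set.Ioi (0:ℝ), (1 / γ) *
        ((∫ ω, Real.exp (-(γ * I ω)) ∂P) - ∫ ω, Real.exp (-(γ * (I ω + S ω))) ∂P)) ∧
    (IndepFun S I P →
      ∫ ω, Real.log (1 + S ω / I ω) ∂P =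
        ∫ γ in Set.Ioi (0:ℝ), (1 / γ) *
          ((∫ ω, Real.exp (-(γ * I ω)) ∂P) * (1 - ∫ ω, Real.exp (-(γ * S ω)) ∂P))) := by
  -- integrability of the exponential terms
  have bexp : ∀ (γ : ℝ) (T : Ω → ℝ), Measurable T → (∀ᵐ ω ∂P, 0 ≤ γ * T ω) →
      Integrable (fun ω => Real.exp (-(γ * T ω))) P := by
    intro γ T hT h
    apply Integrable.mono' (integrable_const (1:ℝ))
      ((hT.const_mul γ).neg.exp.aestronglyMeasurable)
    filter_upwards [h] with ω hω
    rw [Real.norm_eq_abs, abs_of_pos (Real.exp_pos _)]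
    exact Real.exp_le_one_iff.mpr (by show -(γ * T ω) ≤ 0; linarith)
  have hexpI : ∀ γ : ℝ, 0 < γ → Integrable (fun ω => Real.exp (-(γ * I ω))) P := fun γ hγ =>
    bexp γ I hImeas (by filter_upwards [hI] with ω h; positivity)
  have hexpIS : ∀ γ : ℝ, 0 < γ →
      Integrable (fun ω => Real.exp (-(γ * (I ω + S ω)))) P := fun γ hγ =>
    bexp γ (fun ω => I ω + S ω) (hImeas.add hSmeas)
      (by filter_upwards [hI, hS] with ω h1 h2; positivity)
  have hexpS : ∀ γ : ℝ, 0 < γ → Integrable (fun ω => Real.exp (-(γ * S ω))) P := fun γ hγ =>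
    bexp γ S hSmeas (by filter_upwards [hS] with ω h; positivity)
  set E1 : ℝ → ℝ := fun γ => ∫ ω, Real.exp (-(γ * I ω)) ∂P with hE1
  set E2 : ℝ → ℝ := fun γ => ∫ ω, Real.exp (-(γ * (I ω + S ω))) ∂P with hE2
  set g : ℝ → ℝ := fun γ => (1/γ) * (E1 γ - E2 γ) with hg
  -- a.e. nonnegativity of log
  have hlogpos : ∀ᵐ ω ∂P, 0 ≤ Real.log (1 + S ω / I ω) := by
    filter_upwards [hS, hI] with ω hs hi
    apply Real.log_nonneg
    have : 0 ≤ S ω / I ω := div_nonneg hs hi.le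
    linarith
  -- measurability of E1, E2 as functions of γ
  have hmE1 : StronglyMeasurable E1 := by
    apply MeasureTheory.StronglyMeasurable.integral_prod_right'
      (f := fun p : ℝ × Ω => Real.exp (-(p.1 * I p.2)))
    exact ((measurable_fst.mul (hImeas.comp measurable_snd)).neg.exp).stronglyMeasurable
  have hmE2 : StronglyMeasurable E2 := by
    apply MeasureTheory.StronglyMeasurable.integral_prod_right'
      (f := fun p : ℝ × Ω => Real.exp (-(p.1 * (I p.2 + S p.2))))
    exact ((measurable_fst.mul ((hImeas.add hSmeas).comp measurable_snd)).neg.exp).stronglyMeasurable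
  have hmg : AEStronglyMeasurable g (volume.restrict (Ioi (0:ℝ))) := by
    apply StronglyMeasurable.aestronglyMeasurable
    exact ((measurable_const.div measurable_id).stronglyMeasurable.mul (hmE1.sub hmE2))
  -- g nonneg a.e. on Ioi 0
  have hgnn : 0 ≤ᵐ[volume.restrict (Ioi (0:ℝ))] g := by
    filter_upwards [ae_restrict_mem measurableSet_Ioi] with γ hγ
    rw [mem_Ioi] at hγ
    have hle : E2 γ ≤ E1 γ := by
      apply integral_mono_ae (hexpIS γ hγ) (hexpI γ hγ)
      filter_upwards [hS, hI] with ω hs hi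
      apply Real.exp_le_exp.mpr
      nlinarith
    have h1γ : 0 ≤ 1/γ := by positivity
    exact mul_nonneg h1γ (by linarith)
  -- main identity
  have key : ∫ ω, Real.log (1 + S ω / I ω) ∂P = ∫ γ in Ioi (0:ℝ), g γ := by
    rw [integral_eq_lintegral_of_nonneg_ae hlogpos hint.aestronglyMeasurable,
        integral_eq_lintegral_of_nonneg_ae hgnn hmg]
    congr 1
    calc ∫⁻ ω, ENNReal.ofReal (Real.log (1 + S ω / I ω)) ∂P
        = ∫⁻ ω, (∫⁻ γ in Ioi (0:ℝ),
            ENNReal.ofReal ((Real.exp (-(γ * I ω)) - Real.exp (-(γ * (I ω + S ω))))/γ)) ∂P := by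
          apply lintegral_congr_ae
          filter_upwards [hS, hI] with ω hs hi
          exact (frullani hi hs).symm
      _ = ∫⁻ γ in Ioi (0:ℝ), (∫⁻ ω,
            ENNReal.ofReal ((Real.exp (-(γ * I ω)) - Real.exp (-(γ * (I ω + S ω))))/γ) ∂P) := by
          apply lintegral_lintegral_swap
          apply Measurable.aemeasurable
          apply Measurable.ennreal_ofReal
          apply Measurable.div _ measurable_snd
          exact ((measurable_snd.mul (hImeas.comp measurable_fst)).neg.exp).sub
            ((measurable_snd.mul ((hImeas.add hSmeas).comp measurable_fst)).neg.exp)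
      _ = ∫⁻ γ in Ioi (0:ℝ), ENNReal.ofReal (g γ) := by
          apply lintegral_congr_ae
          filter_upwards [ae_restrict_mem measurableSet_Ioi] with γ hγ
          rw [mem_Ioi] at hγ
          have hfin : Integrable
              (fun ω => (Real.exp (-(γ * I ω)) - Real.exp (-(γ * (I ω + S ω))))/γ) P :=
            ((hexpI γ hγ).sub (hexpIS γ hγ)).div_const γ
          have hnn : 0 ≤ᵐ[P]
              fun ω => (Real.exp (-(γ * I ω)) - Real.exp (-(γ * (I ω + S ω))))/γ := by
            filter_upwards [hS, hI] with ω hs hi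
            have : Real.exp (-(γ * (I ω + S ω))) ≤ Real.exp (-(γ * I ω)) := by
              apply Real.exp_le_exp.mpr; nlinarith
            have h1 : (0:ℝ) ≤ Real.exp (-(γ * I ω)) - Real.exp (-(γ * (I ω + S ω))) := by
              linarith
            positivity
          rw [← ofReal_integral_eq_lintegral_ofReal hfin hnn]
          congr 1
          rw [integral_div, integral_sub (hexpI γ hγ) (hexpIS γ hγ)]
          simp [hg, hE1, hE2]
          ring
  refine ⟨key, fun hindep => ?_⟩
  rw [key]
  apply setIntegral_congr_fun measurableSet_Ioi
  intro γ hγ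
  rw [mem_Ioi] at hγ
  have hfac : E2 γ = E1 γ * ∫ ω, Real.exp (-(γ * S ω)) ∂P := by
    have hIndep2 : IndepFun (fun ω => Real.exp (-(γ * I ω)))
        (fun ω => Real.exp (-(γ * S ω))) P :=
      hindep.symm.comp (φ := fun x : ℝ => Real.exp (-(γ * x)))
        (ψ := fun x : ℝ => Real.exp (-(γ * x)))
        ((measurable_id.const_mul γ).neg.exp) ((measurable_id.const_mul γ).neg.exp)
    have := hIndep2.integral_fun_mul_eq_mul_integral (hexpI γ hγ).aestronglyMeasurable
      (hexpS γ hγ).aestronglyMeasurable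
    rw [hE2]
    simp only
    calc ∫ ω, Real.exp (-(γ * (I ω + S ω))) ∂P
        = ∫ ω, Real.exp (-(γ * I ω)) * Real.exp (-(γ * S ω)) ∂P := by
          congr 1; ext ω; rw [← Real.exp_add]; ring_nf
      _ = E1 γ * ∫ ω, Real.exp (-(γ * S ω)) ∂P := this
  show (1/γ) * (E1 γ - E2 γ) = _
  rw [hfac]
  ring
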